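/- arXiv:1905.10213 — 2 statements merged into one kernel-verified Lean document; each statement's English description precedes it below -/
import Mathlib

section
/- For every n ∈ ℕ and every y ∈ ⋃_{m=1}^∞ m·K_n there is a polynomial P(t) = Σ_{i=1}^{pos(Δ_{n+1},0)} c_i·t^i with Σ_{i=1}^{pos(Δ_{n+1},0)} |c_i| ≤ D_n for which |||P(T)y − e_0|||_{N_n} ≤ 3. -/
open scoped Classical in
/-- The function `Next` from Definition 4.1, defined from the sequence `(b_n)`. -/
noncomputable def nextFn (b : ℕ → ℕ) : ℕ × ℕ → ℕ × ℕ :=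
  fun p =>
    if (∃ n : ℕ, 1 ≤ n ∧ p.1 = b n ∧ Even p.2 ∧ p.2 < 2 * n) ∨
       (∃ n : ℕ, 1 ≤ n ∧ p.1 = 2 * b n + 1 ∧ Odd p.2 ∧ 0 < p.2 ∧ p.2 ≤ 2 * n) ∨
       (p.1 = 0 ∧ Odd p.2) then
      (p.1, p.2 + 1)
    else if (∃ n : ℕ, 1 ≤ n ∧ p.1 = b n + 1 ∧ Odd p.2 ∧ p.2 < 2 * n) ∨
        (∃ n : ℕ, 1 ≤ n ∧ p.1 = 2 * b n ∧ Even p.2 ∧ 0 < p.2 ∧ p.2 ≤ 2 * n) then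
      (p.1, p.2 - 1)
    else if Even p.2 then (p.1 + 1, p.2)
    else (p.1 - 1, p.2)

/-- `enum k = Next^k (0, 0)`, the `k`-th element of the ordering of `ℕ × ℕ` defined by `Next`. -/
noncomputable def enum (b : ℕ → ℕ) (k : ℕ) : ℕ × ℕ := (nextFn b)^[k] (0, 0)

/-- The basis vector `e_k = e_{n,m}` where `pos (n, m) = k`, in `s₀,₀^ℕ = ℕ × ℕ →₀ ℝ`. -/
noncomputable def eVec (b : ℕ → ℕ) (k : ℕ) : ℕ × ℕ →₀ ℝ := Finsupp.single (enum b k) 1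

/-- `|(x_{i,j})_i|_N = Σ_i |x_{i,j}| A_{N,i}`, the `N`-th seminorm of the `j`-th column. -/
noncomputable def colNorm (A : ℕ → ℕ → ℝ) (N : ℕ) (x : ℕ × ℕ → ℝ) (j : ℕ) : ℝ :=
  ∑' i : ℕ, |x (i, j)| * A N i

/-- `‖x‖_N = Σ_{j ≤ N} |(x_{i,j})_i|_N`, the seminorms of `s^ℕ`. -/
noncomputable def normK (A : ℕ → ℕ → ℝ) (N : ℕ) (x : ℕ × ℕ → ℝ) : ℝ :=
  ∑ j ∈ Finset.range (N + 1), colNorm A N x j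

/-- `|||x|||_N = Σ_j |(x_{i,j})_i|_N`, the norms of `s₀^ℕ`. -/
noncomputable def norm3 (A : ℕ → ℕ → ℝ) (N : ℕ) (x : ℕ × ℕ → ℝ) : ℝ :=
  ∑' j : ℕ, colNorm A N x j

lemma nextFn_fst_le (b : ℕ → ℕ) (p : ℕ × ℕ) : (nextFn b p).1 ≤ p.1 + 1 := by
  unfold nextFn
  split_ifs <;> simp <;> omega

lemma enum_fst_le (b : ℕ → ℕ) (k : ℕ) : (enum b k).1 ≤ k := by
  induction k with
  | zero => simp [enum]
  | succ k ih =>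
    have : enum b (k + 1) = nextFn b (enum b k) := Function.iterate_succ_apply' _ _ _
    rw [this]
    exact (nextFn_fst_le b _).trans (by omega)

lemma nextFn_row0 (b : ℕ → ℕ) (i : ℕ) (h : ∀ m, 1 ≤ m → b m ≠ i) :
    nextFn b (i, 0) = (i + 1, 0) := by
  unfold nextFn
  rw [if_neg, if_neg, if_pos Even.zero]
  · rintro (⟨n, hn, h1, h2, h3⟩ | ⟨n, hn, h1, h2, h3, h4⟩)
    · simp at h2
    · simp at h3
  · rintro (⟨n, hn, h1, h2, h3⟩ | ⟨n, hn, h1, h2, h3, h4⟩ | ⟨h1, h2⟩)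
    · exact h n hn h1.symm
    · simp at h2
    · simp at h2

lemma norm3_single (A : ℕ → ℕ → ℝ) (N : ℕ) (q : ℕ × ℕ) (c : ℝ) :
    norm3 A N ⇑(Finsupp.single q c) = |c| * A N q.1 := by
  unfold norm3 colNorm
  rw [tsum_eq_single q.2]
  · rw [tsum_eq_single q.1]
    · rw [show ((q.1 : ℕ), q.2) = q from rfl]
      simp [Finsupp.single_apply]
    · intro i hi
      rw [Finsupp.single_apply, if_neg (by
        intro hq; have := congrArg Prod.fst hq; simp at this; exact hi this.symm)]
      simp
  · intro j hj
    have : ∀ i : ℕ, |(Finsupp.single q c : ℕ × ℕ →₀ ℝ) (i, j)| * A N i = 0 := by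
      intro i
      rw [Finsupp.single_apply, if_neg (by
        intro hq; have := congrArg Prod.snd hq; simp at this; exact hj this.symm)]
      simp
    simp only [this, tsum_zero]



set_option maxHeartbeats 2000000 in
/-- For every `n` and every `y ∈ ⋃_{m ≥ 1} m K_n` there is a polynomial `P(t) = Σ_{i=1}^{pos(Δ_{n+1},0)} c_i tⁱ` with `Σ |c_i| ≤ D_n` and `|||P(T) y - e₀|||_{N_n} ≤ 3`. -/
theorem heads_estimate_union
    (A : ℕ → ℕ → ℝ) (b : ℕ → ℕ) (pos : ℕ × ℕ → ℕ)
    (Nn a s : ℕ → ℕ) (D : ℕ → ℝ) (Δ : ℕ → ℕ) (α : ℕ → ℝ)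
    (T : (ℕ × ℕ →₀ ℝ) →ₗ[ℝ] (ℕ × ℕ →₀ ℝ))
    (τ : ℕ → (ℕ × ℕ →₀ ℝ) →ₗ[ℝ] (ℕ × ℕ →₀ ℝ))
    (hA1 : ∀ N j, 1 ≤ A N j)
    (hA2m : ∀ j, Monotone fun N => A N j)
    (hA2u : ∀ j, ¬ BddAbove (Set.range fun N => A N j))
    (hA3m : ∀ N, Monotone fun j => A N j)
    (hA3u : ∀ N, ¬ BddAbove (Set.range fun j => A N j))
    (hA4 : ∀ N j, A N (j + 1) ≤ 2 * A N j)
    (hA5 : ∀ N, Filter.Tendsto (fun j => A N j / A (N + 1) j) Filter.atTop (nhds 0))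
    (hA6 : ∀ N, Filter.Tendsto (fun j => (2 : ℝ) ^ j / A N j) Filter.atTop Filter.atTop)
    (hbpos : ∀ n, 1 ≤ n → 0 < b n)
    (hbmono : ∀ n, 1 ≤ n → b n < b (n + 1))
    (hbgap : ∀ n, 1 ≤ n → 2 * b n + 1 < b (n + 1))
    (hpos : ∀ p k, pos p = k ↔ (nextFn b)^[k] (0, 0) = p)
    (hNle : ∀ n, Nn n ≤ n)
    (hNinf : ∀ N m, ∃ n, m ≤ n ∧ Nn n = N)
    (hD : ∀ n, 1 ≤ D n)
    (hΔ0 : Δ 0 = 1)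
    (hΔ : ∀ n, Δ (n + 1) = a n + pos (Δ n, 0))
    (hord0 : Δ 0 < a 0 ∧ a 0 < Δ 1)
    (hord : ∀ n, 1 ≤ n → Δ n < b n ∧ 2 * b n < s n ∧ s n < a n ∧ a n < Δ (n + 1))
    (hbΔ : ∀ n, 1 ≤ n → 2 * pos (Δ n, 0) ≤ b n)
    (hc2bn : ∀ n k, 1 ≤ n → b n ≤ k →
      (4 : ℝ) ^ pos (Δ n, 0) * A (Nn (n - 1) + 1) k ≤ A (Nn (n - 1) + 2) k / D (n - 1))
    (hc1 : ∀ n, 1 ≤ n →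
      A (Nn n) (a n) * (2 * D (n - 1)) ^ (pos (s n, 0) - pos (Δ n, 0) - 1) ≤
        (2 : ℝ) ^ (pos (a n, 0) - pos (s n, 0) - 1))
    (hc2 : ∀ n, 1 ≤ n → A (Nn (n - 1)) (a (n - 1)) ≤ A (Nn n) (a n))
    (hc4 : ∀ n, 1 ≤ n → D (n - 1) * A (Nn (n - 1)) (b n) ≤ A (Nn n) (a n))
    (hc3 : ∀ n, A (Nn n) (a n) * 4 ^ pos (Δ n, 0) * A 0 0 ≤ A (Nn n + 1) (a n))
    (hc1' : A (Nn 0) (a 0) ≤ (2 : ℝ) ^ (pos (a 0, 0) - pos (Δ 0, 0) - 1))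
    (hα0 : ∀ j, pos (Δ 0, 0) ≤ j → j < pos (a 0, 0) →
      α j = (2 : ℝ) ^ (j - pos (Δ 0, 0)) / A (Nn 0) (a 0))
    (hα1 : ∀ n j, 1 ≤ n → pos (Δ n, 0) ≤ j → j < pos (s n, 0) →
      α j = (1 / A (Nn n) (a n)) * ((2 * D (n - 1)) ^ (j - pos (Δ n, 0)))⁻¹)
    (hα2 : ∀ n j, 1 ≤ n → pos (s n, 0) ≤ j → j < pos (a n, 0) →
      α j = α (pos (s n, 0) - 1) * 2 ^ (j - pos (s n, 0)))
    (hT0 : T (eVec b 0) = α 1 • eVec b 1)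
    (hTa : ∀ n j, pos (Δ n, 0) ≤ j → j + 1 < pos (a n, 0) →
      T (eVec b j) = (α (j + 1) / α j) • eVec b (j + 1))
    (hTb : ∀ n : ℕ, T (eVec b (pos (a n, 0) - 1)) =
      (α (pos (a n, 0) - 1))⁻¹ • ((A (Nn n) (a n))⁻¹ • eVec b (pos (a n, 0)) + eVec b 0))
    (hTc : ∀ n j, pos (a n, 0) ≤ j → j + 1 < pos (Δ (n + 1), 0) →
      T (eVec b j) = eVec b (j + 1))
    (hTd : ∀ n : ℕ, T (eVec b (pos (Δ (n + 1), 0) - 1)) =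
      (A (Nn n) (a n) * α (pos (Δ (n + 1), 0))) • eVec b (pos (Δ (n + 1), 0)) -
        (A (Nn n) (a n) * α (pos (Δ n, 0))) • eVec b (pos (Δ n, 0)))
    (hτ : ∀ (n : ℕ) (y : ℕ → ℝ),
      τ n (∑ j ∈ Finset.range (pos (Δ (n + 1), 0)), y j • (T ^ j) (eVec b 0)) =
        ∑ j ∈ Finset.range (pos (a n, 0)), y j • (T ^ j) (eVec b 0))
    (hDn : ∀ n : ℕ, ∀ y : ℕ × ℕ →₀ ℝ,
      y ∈ Submodule.span ℝ (eVec b '' {j | j < pos (Δ (n + 1), 0)}) →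
      norm3 A 0 ⇑y ≤ 1 → 1 / 2 ≤ norm3 A 0 ⇑(τ n y) →
      ∃ c : ℕ → ℝ, (∑ i ∈ Finset.Icc 1 (pos (Δ (n + 1), 0)), |c i|) ≤ D n ∧
        norm3 A (Nn n)
            ⇑((∑ i ∈ Finset.Icc 1 (pos (Δ (n + 1), 0)), c i • (T ^ i) y) - eVec b 0) ≤
          2 / A (Nn n) (a n) * norm3 A (Nn n) ⇑(eVec b (pos (a n, 0))) +
            D n * sSup ((fun j => norm3 A (Nn n) ⇑((T ^ j) (eVec b 0))) ''
              Set.Icc (pos (Δ (n + 1), 0)) (2 * (pos (Δ (n + 1), 0) - 1))))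
    :
    ∀ n : ℕ, ∀ y : ℕ × ℕ →₀ ℝ,
      (∃ (m : ℕ) (z : ℕ × ℕ →₀ ℝ), 1 ≤ m ∧
        z ∈ Submodule.span ℝ (eVec b '' {j | j < pos (Δ (n + 1), 0)}) ∧
        norm3 A 0 ⇑z ≤ 1 ∧ 1 / 2 ≤ norm3 A 0 ⇑(τ n z) ∧ y = (m : ℝ) • z) →
      ∃ c : ℕ → ℝ, (∑ i ∈ Finset.Icc 1 (pos (Δ (n + 1), 0)), |c i|) ≤ D n ∧
        norm3 A (Nn n)
          ⇑((∑ i ∈ Finset.Icc 1 (pos (Δ (n + 1), 0)), c i • (T ^ i) y) - eVec b 0) ≤ 3 := by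
  have hpos_enum : ∀ p : ℕ × ℕ, enum b (pos p) = p := fun p => (hpos p (pos p)).mp rfl
  have pos_ge : ∀ i : ℕ, i ≤ pos (i, 0) := by
    intro i
    have h := hpos_enum (i, 0)
    have h2 := enum_fst_le b (pos (i, 0))
    rw [h] at h2
    exact h2
  have hΔpos : ∀ n, 1 ≤ Δ n := by
    intro n
    induction n with
    | zero => rw [hΔ0]
    | succ n ih =>
      have h1 := pos_ge (Δ n)
      have h2 := hΔ n
      omega
  have hA0 : ∀ N j, (0:ℝ) < A N j := fun N j => lt_of_lt_of_le one_pos (hA1 N j)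
  have hDpos : ∀ n, (0:ℝ) < D n := fun n => lt_of_lt_of_le one_pos (hD n)
  have hbmono' : ∀ m k, 1 ≤ m → m ≤ k → b m ≤ b k := by
    intro m k hm hmk
    induction k with
    | zero => omega
    | succ k ih =>
      rcases Nat.lt_or_ge m (k + 1) with h | h
      · have h1 := ih (by omega)
        have h2 := hbmono k (by omega)
        omega
      · have h3 : m = k + 1 := by omega
        rw [h3]
  have no_b : ∀ n i, a n ≤ i → i < Δ (n + 1) → ∀ m, 1 ≤ m → b m ≠ i := by
    intro n i hai hiΔ m hm heq
    rcases Nat.lt_or_ge n m with h | h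
    · have h1 := hbmono' (n + 1) m (by omega) h
      have h2 := (hord (n + 1) (by omega)).1
      omega
    · have h1 := hbmono' m n hm h
      have h2 := hord n (by omega)
      omega
  have enum_an : ∀ n t, t ≤ pos (Δ n, 0) → enum b (pos (a n, 0) + t) = (a n + t, 0) := by
    intro n t
    induction t with
    | zero => intro _; simpa using hpos_enum (a n, 0)
    | succ t ih =>
      intro ht
      have h1 : enum b (pos (a n, 0) + (t + 1)) = nextFn b (enum b (pos (a n, 0) + t)) :=
        Function.iterate_succ_apply' _ _ _
      rw [h1, ih (by omega), nextFn_row0 b _ (fun m hm =>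
        no_b n (a n + t) (by omega) (by have := hΔ n; omega) m hm)]
      rfl
  have posΔ : ∀ n, pos (Δ (n + 1), 0) = pos (a n, 0) + pos (Δ n, 0) := by
    intro n
    have h := enum_an n (pos (Δ n, 0)) le_rfl
    rw [show a n + pos (Δ n, 0) = Δ (n + 1) from (hΔ n).symm] at h
    exact (hpos (Δ (n + 1), 0) _).mpr h
  have pΔ0 : pos (Δ 0, 0) = 1 := by
    rw [hΔ0]
    apply (hpos (1, 0) 1).mpr
    show nextFn b ((nextFn b)^[0] (0, 0)) = (1, 0)
    rw [Function.iterate_zero_apply, nextFn_row0 b 0 (fun m hm => (hbpos m hm).ne')]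
  have hΔa : ∀ n, pos (Δ n, 0) < pos (a n, 0) := by
    intro n
    cases n with
    | zero =>
      rw [pΔ0]
      have h1 := pos_ge (a 0)
      have h2 := hord0.1
      have h3 := hΔ0
      omega
    | succ n =>
      have h1 := hbΔ (n + 1) (by omega)
      have h2 := hord (n + 1) (by omega)
      have h3 := pos_ge (a (n + 1))
      have h4 := hbpos (n + 1) (by omega)
      omega
  have hΔs : ∀ n, 1 ≤ n → pos (Δ n, 0) < pos (s n, 0) := by
    intro n hn
    have h1 := hbΔ n hn
    have h2 := hord n hn
    have h3 := pos_ge (s n)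
    have h4 := hbpos n hn
    omega
  have αpos : ∀ n j, pos (Δ n, 0) ≤ j → j < pos (a n, 0) → 0 < α j := by
    intro n j h1 h2
    cases n with
    | zero =>
      rw [hα0 j h1 h2]
      exact div_pos (by positivity) (hA0 _ _)
    | succ n =>
      have hA' := hA0 (Nn (n + 1)) (a (n + 1))
      have hD' := hDpos (n + 1 - 1)
      by_cases hjs : j < pos (s (n + 1), 0)
      · rw [hα1 (n + 1) j (by omega) h1 hjs]
        exact mul_pos (div_pos one_pos hA') (inv_pos.mpr (pow_pos (mul_pos two_pos hD') _))
      · have hΔs' := hΔs (n + 1) (by omega)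
        rw [hα2 (n + 1) j (by omega) (by omega) h2,
          hα1 (n + 1) _ (by omega) (by omega) (by omega)]
        exact mul_pos (mul_pos (div_pos one_pos hA')
          (inv_pos.mpr (pow_pos (mul_pos two_pos hD') _))) (pow_pos two_pos _)
  have step : ∀ n j, pos (Δ n, 0) ≤ j → j + 1 < pos (a n, 0) →
      (T ^ j) (eVec b 0) = α j • eVec b j →
      (T ^ (j + 1)) (eVec b 0) = α (j + 1) • eVec b (j + 1) := by
    intro n j h1 h2 hj
    have hαne : α j ≠ 0 := ne_of_gt (αpos n j h1 (by omega))
    rw [pow_succ', Module.End.mul_apply, hj, map_smul, hTa n j h1 h2, smul_smul]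
    congr 1
    field_simp
  have inner : ∀ n, (T ^ pos (Δ n, 0)) (eVec b 0) = α (pos (Δ n, 0)) • eVec b (pos (Δ n, 0)) →
      ∀ j, pos (Δ n, 0) ≤ j → j < pos (a n, 0) →
      (T ^ j) (eVec b 0) = α j • eVec b j := by
    intro n hbase j hj
    induction j, hj using Nat.le_induction with
    | base => intro _; exact hbase
    | succ j hj ih =>
      intro hj1
      exact step n j hj hj1 (ih (by omega))
  have base : ∀ n, (T ^ pos (Δ n, 0)) (eVec b 0) = α (pos (Δ n, 0)) • eVec b (pos (Δ n, 0)) := by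
    intro n
    induction n with
    | zero =>
      rw [pΔ0, pow_one]
      exact hT0
    | succ n ih =>
      have key_n := inner n ih
      have hAne : A (Nn n) (a n) ≠ 0 := ne_of_gt (hA0 _ _)
      have hlt : pos (Δ n, 0) < pos (a n, 0) := hΔa n
      have hpΔ1 : 1 ≤ pos (Δ n, 0) := le_trans (hΔpos n) (pos_ge (Δ n))
      have hstep_pa : (T ^ pos (a n, 0)) (eVec b 0)
          = (A (Nn n) (a n))⁻¹ • eVec b (pos (a n, 0)) + eVec b 0 := by
        have h2 : (T ^ (pos (a n, 0) - 1)) (eVec b 0)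
            = α (pos (a n, 0) - 1) • eVec b (pos (a n, 0) - 1) :=
          key_n _ (by omega) (by omega)
        have hαne : α (pos (a n, 0) - 1) ≠ 0 := ne_of_gt (αpos n _ (by omega) (by omega))
        have h1 : pos (a n, 0) = (pos (a n, 0) - 1) + 1 := by omega
        conv_lhs => rw [h1, pow_succ', Module.End.mul_apply, h2]
        rw [map_smul, hTb n, smul_smul, mul_inv_cancel₀ hαne, one_smul]
      have gap : ∀ t, t < pos (Δ n, 0) → (T ^ (pos (a n, 0) + t)) (eVec b 0)
          = (A (Nn n) (a n))⁻¹ • eVec b (pos (a n, 0) + t) + (T ^ t) (eVec b 0) := by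
        intro t
        induction t with
        | zero => intro _; simpa using hstep_pa
        | succ t ih2 =>
          intro ht
          have hrec := ih2 (by omega)
          have hTc' := hTc n (pos (a n, 0) + t) (by omega) (by rw [posΔ n]; omega)
          calc (T ^ (pos (a n, 0) + (t + 1))) (eVec b 0)
              = T ((T ^ (pos (a n, 0) + t)) (eVec b 0)) := by
                rw [show pos (a n, 0) + (t + 1) = (pos (a n, 0) + t) + 1 by omega,
                  pow_succ', Module.End.mul_apply]
            _ = (A (Nn n) (a n))⁻¹ • T (eVec b (pos (a n, 0) + t)) + T ((T ^ t) (eVec b 0)) := by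
                rw [hrec, map_add, map_smul]
            _ = (A (Nn n) (a n))⁻¹ • eVec b (pos (a n, 0) + t + 1) + (T ^ (t + 1)) (eVec b 0) := by
                rw [hTc', ← Module.End.mul_apply, ← pow_succ']
      have hfin : pos (Δ (n + 1), 0) = (pos (a n, 0) + (pos (Δ n, 0) - 1)) + 1 := by
        rw [posΔ n]; omega
      have hgap := gap (pos (Δ n, 0) - 1) (by omega)
      have hΔidx : pos (a n, 0) + (pos (Δ n, 0) - 1) = pos (Δ (n + 1), 0) - 1 := by
        rw [posΔ n]; omega
      conv_lhs => rw [hfin, pow_succ', Module.End.mul_apply, hgap]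
      rw [map_add, map_smul, hΔidx, hTd n]
      have h5 : T ((T ^ (pos (Δ n, 0) - 1)) (eVec b 0))
          = α (pos (Δ n, 0)) • eVec b (pos (Δ n, 0)) := by
        rw [← Module.End.mul_apply, ← pow_succ',
          show pos (Δ n, 0) - 1 + 1 = pos (Δ n, 0) by omega]
        exact ih
      rw [h5, smul_sub, smul_smul, smul_smul, inv_mul_cancel_left₀ hAne,
        inv_mul_cancel_left₀ hAne]
      abel
  have key := fun n => inner n (base n)
  have norm3_smul_eVec : ∀ (N k : ℕ) (c : ℝ),
      norm3 A N ⇑(c • eVec b k) = |c| * A N (enum b k).1 := by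
    intro N k c
    rw [show c • eVec b k = Finsupp.single (enum b k) c by
      rw [eVec, Finsupp.smul_single, smul_eq_mul, mul_one]]
    exact norm3_single A N _ c
  intro n y hy
  obtain ⟨m, z, hm, hspan, hz1, hz2, rfl⟩ := hy
  obtain ⟨c, hcsum, hcle⟩ := hDn n z hspan hz1 hz2
  have hmR : (0:ℝ) < (m : ℝ) := by exact_mod_cast Nat.lt_of_lt_of_le Nat.zero_lt_one hm
  refine ⟨fun i => c i / (m : ℝ), ?_, ?_⟩
  · calc ∑ i ∈ Finset.Icc 1 (pos (Δ (n + 1), 0)), |c i / (m : ℝ)|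
        ≤ ∑ i ∈ Finset.Icc 1 (pos (Δ (n + 1), 0)), |c i| := by
          apply Finset.sum_le_sum
          intro i _
          rw [abs_div, abs_of_pos hmR]
          exact div_le_self (abs_nonneg _) (by exact_mod_cast hm)
      _ ≤ D n := hcsum
  · have hsum_eq : (∑ i ∈ Finset.Icc 1 (pos (Δ (n + 1), 0)),
        (c i / (m : ℝ)) • (T ^ i) ((m : ℝ) • z))
        = ∑ i ∈ Finset.Icc 1 (pos (Δ (n + 1), 0)), c i • (T ^ i) z := by
      apply Finset.sum_congr rfl
      intro i _
      rw [map_smul, smul_smul, div_mul_cancel₀ _ (ne_of_gt hmR)]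
    rw [hsum_eq]
    refine hcle.trans ?_
    have henum_a : enum b (pos (a n, 0)) = (a n, 0) := hpos_enum _
    have hApos := hA0 (Nn n) (a n)
    have h1 : norm3 A (Nn n) ⇑(eVec b (pos (a n, 0))) = A (Nn n) (a n) := by
      have h := norm3_smul_eVec (Nn n) (pos (a n, 0)) 1
      rw [one_smul] at h
      rw [h, henum_a]
      simp
    have hsup : sSup ((fun j => norm3 A (Nn n) ⇑((T ^ j) (eVec b 0))) ''
        Set.Icc (pos (Δ (n + 1), 0)) (2 * (pos (Δ (n + 1), 0) - 1))) ≤ 1 / D n := by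
      apply Real.sSup_le
      · rintro x ⟨j, hj, rfl⟩
        dsimp only
        obtain ⟨hj1, hj2⟩ := hj
        have hpΔ'1 : 1 ≤ pos (Δ (n + 1), 0) := le_trans (hΔpos (n + 1)) (pos_ge _)
        have hb1 := hbΔ (n + 1) (by omega)
        obtain ⟨ho1, ho2, ho3, ho4⟩ := hord (n + 1) (by omega)
        have hsge := pos_ge (s (n + 1))
        have hage := pos_ge (a (n + 1))
        have hbp := hbpos (n + 1) (by omega)
        have hjs : j < pos (s (n + 1), 0) := by omega
        have hja : j < pos (a (n + 1), 0) := by omega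
        have hk := key (n + 1) j hj1 hja
        rw [hk, norm3_smul_eVec, abs_of_pos (αpos (n + 1) j hj1 hja)]
        have hαj := hα1 (n + 1) j (by omega) hj1 hjs
        simp only [Nat.add_sub_cancel] at hαj
        have hc4' := hc4 (n + 1) (by omega)
        simp only [Nat.add_sub_cancel] at hc4'
        have hA'pos := hA0 (Nn (n + 1)) (a (n + 1))
        have hDp := hDpos n
        have hAj : A (Nn n) (enum b j).1 ≤ A (Nn n) (b (n + 1)) :=
          hA3m (Nn n) (le_trans (enum_fst_le b j) (by omega))
        have hXpos : (0:ℝ) < (2 * D n) ^ (j - pos (Δ (n + 1), 0)) :=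
          pow_pos (mul_pos two_pos hDp) _
        have hX1 : (1:ℝ) ≤ (2 * D n) ^ (j - pos (Δ (n + 1), 0)) :=
          one_le_pow₀ (by nlinarith [hD n])
        have hXinv : ((2 * D n) ^ (j - pos (Δ (n + 1), 0)))⁻¹ ≤ 1 := by
          have hh := mul_le_mul_of_nonneg_right hX1 (le_of_lt (inv_pos.mpr hXpos))
          rw [mul_inv_cancel₀ (ne_of_gt hXpos)] at hh
          linarith
        rw [hαj]
        calc 1 / A (Nn (n + 1)) (a (n + 1)) * ((2 * D n) ^ (j - pos (Δ (n + 1), 0)))⁻¹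
              * A (Nn n) (enum b j).1
            ≤ 1 / A (Nn (n + 1)) (a (n + 1)) * 1 * A (Nn n) (b (n + 1)) := by
              apply mul_le_mul (mul_le_mul_of_nonneg_left hXinv
                  (le_of_lt (div_pos one_pos hA'pos))) hAj
                (le_of_lt (hA0 _ _)) (le_of_lt (mul_pos (div_pos one_pos hA'pos) one_pos))
          _ = A (Nn n) (b (n + 1)) / A (Nn (n + 1)) (a (n + 1)) := by ring
          _ ≤ 1 / D n := by
              rw [div_le_div_iff₀ hA'pos hDp]
              nlinarith [hc4']
      · exact le_of_lt (div_pos one_pos (hDpos n))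
    rw [h1]
    have h2 : 2 / A (Nn n) (a n) * A (Nn n) (a n) = 2 := by field_simp
    rw [h2]
    have hDS : D n * sSup ((fun j => norm3 A (Nn n) ⇑((T ^ j) (eVec b 0))) ''
        Set.Icc (pos (Δ (n + 1), 0)) (2 * (pos (Δ (n + 1), 0) - 1))) ≤ 1 := by
      calc D n * sSup ((fun j => norm3 A (Nn n) ⇑((T ^ j) (eVec b 0))) ''
            Set.Icc (pos (Δ (n + 1), 0)) (2 * (pos (Δ (n + 1), 0) - 1)))
          ≤ D n * (1 / D n) := mul_le_mul_of_nonneg_left hsup (le_of_lt (hDpos n))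
        _ = 1 := by rw [mul_one_div, div_self (ne_of_gt (hDpos n))]
    linarith
end

section
/- For every n ∈ ℕ, if j ≥ pos(Δ_{n+1},0) and 1 ≤ i ≤ pos(Δ_{n+1},0), then for every N ∈ ℕ: ‖e_{i+j}‖_N ≤ 2^i·‖e_j‖_{N+1}. -/
namespace Snl

def UpC (b : ℕ → ℕ) (c y : ℕ) : Prop :=
  (∃ n : ℕ, 1 ≤ n ∧ c = b n ∧ Even y ∧ y < 2 * n) ∨
  (∃ n : ℕ, 1 ≤ n ∧ c = 2 * b n + 1 ∧ Odd y ∧ 0 < y ∧ y ≤ 2 * n) ∨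
  (c = 0 ∧ Odd y)

def DnC (b : ℕ → ℕ) (c y : ℕ) : Prop :=
  (∃ n : ℕ, 1 ≤ n ∧ c = b n + 1 ∧ Odd y ∧ y < 2 * n) ∨
  (∃ n : ℕ, 1 ≤ n ∧ c = 2 * b n ∧ Even y ∧ 0 < y ∧ y ≤ 2 * n)

lemma next_up {b : ℕ → ℕ} {c y : ℕ} (h : UpC b c y) : nextFn b (c, y) = (c, y + 1) := by
  unfold nextFn
  dsimp only
  split_ifs with h1 h2 h3
  · rfl
  · exact absurd h h1
  · exact absurd h h1
  · exact absurd h h1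

lemma next_dn {b : ℕ → ℕ} {c y : ℕ} (h1 : ¬ UpC b c y) (h2 : DnC b c y) :
    nextFn b (c, y) = (c, y - 1) := by
  unfold nextFn
  dsimp only
  split_ifs with hc1 hc2 hc3
  · exact absurd hc1 h1
  · rfl
  · exact absurd h2 hc2
  · exact absurd h2 hc2

lemma next_right {b : ℕ → ℕ} {c y : ℕ} (h1 : ¬ UpC b c y) (h2 : ¬ DnC b c y) (h3 : Even y) :
    nextFn b (c, y) = (c + 1, y) := by
  unfold nextFn
  dsimp only
  split_ifs with hc1 hc2
  · exact absurd hc1 h1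
  · exact absurd hc2 h2
  · rfl

lemma next_left {b : ℕ → ℕ} {c y : ℕ} (h1 : ¬ UpC b c y) (h2 : ¬ DnC b c y) (h3 : Odd y) :
    nextFn b (c, y) = (c - 1, y) := by
  unfold nextFn
  dsimp only
  split_ifs with hc1 hc2 hc3
  · exact absurd hc1 h1
  · exact absurd hc2 h2
  · have ho := Nat.odd_iff.mp h3
    have he := Nat.even_iff.mp hc3
    omega
  · rfl

lemma next_fst_le (b : ℕ → ℕ) (p : ℕ × ℕ) : (nextFn b p).1 ≤ p.1 + 1 := by
  obtain ⟨c, y⟩ := p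
  unfold nextFn
  dsimp only
  split_ifs <;> dsimp <;> omega

lemma next_snd_ge (b : ℕ → ℕ) (p : ℕ × ℕ) : p.2 ≤ (nextFn b p).2 + 1 := by
  obtain ⟨c, y⟩ := p
  unfold nextFn
  dsimp only
  split_ifs <;> dsimp <;> omega

lemma next_snd_mono {b : ℕ → ℕ} {p : ℕ × ℕ} (h : ¬ DnC b p.1 p.2) : p.2 ≤ (nextFn b p).2 := by
  obtain ⟨c, y⟩ := p
  unfold nextFn
  dsimp only
  split_ifs with h1 h2 h3
  · dsimp; omega
  · exact absurd h2 h
  · dsimp; omega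
  · dsimp; omega

def GoodB (b : ℕ → ℕ) : Prop :=
  (∀ n, 1 ≤ n → 0 < b n) ∧ (∀ n, 1 ≤ n → b n < b (n + 1)) ∧ (∀ n, 1 ≤ n → 2 * b n + 1 < b (n + 1))

lemma GoodB.pos {b : ℕ → ℕ} (hb : GoodB b) {m : ℕ} (hm : 1 ≤ m) : 0 < b m := hb.1 m hm

lemma GoodB.le {b : ℕ → ℕ} (hb : GoodB b) {m k : ℕ} (hm : 1 ≤ m) (h : m ≤ k) : b m ≤ b k := by
  induction k, h using Nat.le_induction with
  | base => exact le_rfl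
  | succ k hk ih => exact ih.trans (le_of_lt (hb.2.1 k (hm.trans hk)))

lemma GoodB.gap2 {b : ℕ → ℕ} (hb : GoodB b) {m k : ℕ} (hm : 1 ≤ m) (h : m < k) :
    2 * b m + 1 < b k :=
  lt_of_lt_of_le (hb.2.2 m hm) (hb.le (by omega) h)

lemma next_right' {b : ℕ → ℕ} {c y : ℕ} (hev : Even y)
    (h1 : ∀ k, 1 ≤ k → c = b k → 2 * k ≤ y)
    (h2 : ∀ k, 1 ≤ k → c = 2 * b k → y = 0 ∨ 2 * k < y) :
    nextFn b (c, y) = (c + 1, y) := by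
  have hy := Nat.even_iff.mp hev
  apply next_right
  · rintro (⟨k, hk, he, _, hlt⟩ | ⟨k, hk, he, hod, _, _⟩ | ⟨he, hod⟩)
    · have := h1 k hk he; omega
    · have := Nat.odd_iff.mp hod; omega
    · have := Nat.odd_iff.mp hod; omega
  · rintro (⟨k, hk, he, hod, hlt⟩ | ⟨k, hk, he, _, hpos, hle⟩)
    · have := Nat.odd_iff.mp hod; omega
    · have := h2 k hk he; omega
  · exact hev

lemma next_left' {b : ℕ → ℕ} {c y : ℕ} (hod : Odd y) (hc0 : c ≠ 0)
    (h1 : ∀ k, 1 ≤ k → c = 2 * b k + 1 → 2 * k < y)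
    (h2 : ∀ k, 1 ≤ k → c = b k + 1 → 2 * k ≤ y) :
    nextFn b (c, y) = (c - 1, y) := by
  have hy := Nat.odd_iff.mp hod
  apply next_left
  · rintro (⟨k, hk, he, hev, hlt⟩ | ⟨k, hk, he, _, _, hle⟩ | ⟨he, _⟩)
    · have := Nat.even_iff.mp hev; omega
    · have := h1 k hk he; omega
    · exact hc0 he
  · rintro (⟨k, hk, he, _, hlt⟩ | ⟨k, hk, he, hev, _, _⟩)
    · have := h2 k hk he; omega
    · have := Nat.even_iff.mp hev; omega
  · exact hod

lemma iter_right {b : ℕ → ℕ} {y c1 K : ℕ}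
    (hstep : ∀ t, t < K → nextFn b (c1 + t, y) = (c1 + t + 1, y)) :
    ∀ t, t ≤ K → (nextFn b)^[t] (c1, y) = (c1 + t, y) := by
  intro t
  induction t with
  | zero => intro _; simp
  | succ t ih =>
    intro ht
    rw [Function.iterate_succ_apply', ih (by omega), hstep t (by omega)]
    rfl

lemma iter_left {b : ℕ → ℕ} {y c1 K : ℕ} (hK : K ≤ c1)
    (hstep : ∀ t, t < K → nextFn b (c1 - t, y) = (c1 - t - 1, y)) :
    ∀ t, t ≤ K → (nextFn b)^[t] (c1, y) = (c1 - t, y) := by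
  intro t
  induction t with
  | zero => intro _; simp
  | succ t ih =>
    intro ht
    rw [Function.iterate_succ_apply', ih (by omega), hstep t (by omega)]
    congr 1

lemma step_down_2B {b : ℕ → ℕ} (hb : GoodB b) {m y : ℕ} (hm : 1 ≤ m)
    (hev : Even y) (h0 : 0 < y) (h2 : y ≤ 2 * m) :
    nextFn b (2 * b m, y) = (2 * b m, y - 1) := by
  have hbm := hb.pos hm
  have hy := Nat.even_iff.mp hev
  apply next_dn
  · rintro (⟨k, hk, he, _, _⟩ | ⟨k, hk, he, hod, _, _⟩ | ⟨he, _⟩)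
    · rcases lt_trichotomy k m with h | h | h
      · have := hb.gap2 hk h; omega
      · subst h; omega
      · have := hb.gap2 hm h; omega
    · have := Nat.odd_iff.mp hod; omega
    · omega
  · exact Or.inr ⟨m, hm, rfl, hev, h0, h2⟩

lemma step_down_B1 {b : ℕ → ℕ} (hb : GoodB b) {m y : ℕ} (hm : 1 ≤ m)
    (hod : Odd y) (hy2 : y < 2 * m) :
    nextFn b (b m + 1, y) = (b m + 1, y - 1) := by
  have hbm := hb.pos hm
  have hy := Nat.odd_iff.mp hod
  apply next_dn
  · rintro (⟨k, hk, he, hev, _⟩ | ⟨k, hk, he, _, _, _⟩ | ⟨he, _⟩)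
    · have := Nat.even_iff.mp hev; omega
    · rcases lt_trichotomy k m with h | h | h
      · have := hb.gap2 hk h; omega
      · subst h; omega
      · have := hb.gap2 hm h; omega
    · omega
  · exact Or.inl ⟨m, hm, rfl, hod, hy2⟩

lemma step_up_B {b : ℕ → ℕ} {M y : ℕ} (hM : 1 ≤ M) (hev : Even y) (hy : y < 2 * M) :
    nextFn b (b M, y) = (b M, y + 1) :=
  next_up (Or.inl ⟨M, hM, rfl, hev, hy⟩)

lemma step_up_2B1 {b : ℕ → ℕ} {m y : ℕ} (hm : 1 ≤ m) (hod : Odd y) (hy : y ≤ 2 * m) :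
    nextFn b (2 * b m + 1, y) = (2 * b m + 1, y + 1) :=
  next_up (Or.inr (Or.inl ⟨m, hm, rfl, hod, by have := Nat.odd_iff.mp hod; omega, hy⟩))

lemma step_up_0 {b : ℕ → ℕ} {y : ℕ} (hod : Odd y) : nextFn b (0, y) = (0, y + 1) :=
  next_up (Or.inr (Or.inr ⟨rfl, hod⟩))

/-- Left run on an odd row from `2 b m` down to `b m + 1`. -/
lemma runA {b : ℕ → ℕ} (hb : GoodB b) {m y : ℕ} (hm : 1 ≤ m) (hy : Odd y) :
    ∀ t, t ≤ b m - 1 → (nextFn b)^[t] (2 * b m, y) = (2 * b m - t, y) := by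
  have hbm := hb.pos hm
  apply iter_left (by omega)
  intro t ht
  apply next_left' hy (by omega)
  · intro k hk he
    rcases lt_trichotomy k m with h | h | h
    · have := hb.gap2 hk h; omega
    · subst h; omega
    · have := hb.gap2 hm h; omega
  · intro k hk he
    rcases lt_trichotomy k m with h | h | h
    · have := hb.gap2 hk h; omega
    · subst h; omega
    · have := hb.gap2 hm h; omega

/-- Right run on an even row from `b m + 1` up to `2 b m`. -/
lemma runB {b : ℕ → ℕ} (hb : GoodB b) {m y : ℕ} (hm : 1 ≤ m) (hy : Even y) :
    ∀ t, t ≤ b m - 1 → (nextFn b)^[t] (b m + 1, y) = (b m + 1 + t, y) := by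
  have hbm := hb.pos hm
  apply iter_right
  intro t ht
  apply next_right' hy
  · intro k hk he
    rcases lt_trichotomy k m with h | h | h
    · have := hb.gap2 hk h; omega
    · subst h; omega
    · have := hb.gap2 hm h; omega
  · intro k hk he
    rcases lt_trichotomy k m with h | h | h
    · have := hb.gap2 hk h; omega
    · subst h; omega
    · have := hb.gap2 hm h; omega

/-- Right run on row 0 strictly between `b M` and `b (M+1)`. -/
lemma run0 {b : ℕ → ℕ} (hb : GoodB b) {M c1 : ℕ} (hM : 1 ≤ M) (hc1 : b M < c1) :
    ∀ t, c1 + t ≤ b (M + 1) → (nextFn b)^[t] (c1, 0) = (c1 + t, 0) := by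
  intro t ht
  refine iter_right (K := t) ?_ t le_rfl
  intro u hu
  apply next_right' Even.zero
  · intro k hk he
    rcases lt_trichotomy k M with h | h | h
    · have := hb.gap2 hk h; omega
    · subst h; omega
    · have h1 := hb.gap2 hM h
      have h2 : b (M + 1) ≤ b k := hb.le (by omega) (by omega)
      omega
  · intro k hk he
    exact Or.inl rfl

/-- Left run on an odd row from `b (m+1)` down to `2 b m + 1`. -/
lemma runD {b : ℕ → ℕ} (hb : GoodB b) {m y : ℕ} (hm : 1 ≤ m) (hy : Odd y) :
    ∀ t, t ≤ b (m + 1) - (2 * b m + 1) →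
      (nextFn b)^[t] (b (m + 1), y) = (b (m + 1) - t, y) := by
  have hbm := hb.pos hm
  have hgap := hb.2.2 m hm
  apply iter_left (by omega)
  intro t ht
  apply next_left' hy (by omega)
  · intro k hk he
    rcases lt_trichotomy k m with h | h | h
    · have := hb.gap2 hk h; omega
    · subst h; omega
    · have h2 : b (m + 1) ≤ b k := hb.le (by omega) (by omega)
      omega
  · intro k hk he
    rcases lt_trichotomy k m with h | h | h
    · have := hb.gap2 hk h; omega
    · subst h; omega
    · have h2 : b (m + 1) ≤ b k := hb.le (by omega) (by omega)
      omega

/-- Right run on an even row from `2 b m + 1` up to `b (m+1)`. -/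
lemma runE {b : ℕ → ℕ} (hb : GoodB b) {m y : ℕ} (hm : 1 ≤ m) (hy : Even y) :
    ∀ t, 2 * b m + 1 + t ≤ b (m + 1) →
      (nextFn b)^[t] (2 * b m + 1, y) = (2 * b m + 1 + t, y) := by
  have hbm := hb.pos hm
  have hgap := hb.2.2 m hm
  intro t ht
  refine iter_right (K := t) ?_ t le_rfl
  intro u hu
  apply next_right' hy
  · intro k hk he
    rcases lt_trichotomy k m with h | h | h
    · have := hb.gap2 hk h; omega
    · subst h; omega
    · have h2 : b (m + 1) ≤ b k := hb.le (by omega) (by omega)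
      omega
  · intro k hk he
    rcases lt_trichotomy k m with h | h | h
    · have := hb.gap2 hk h; omega
    · subst h; omega
    · have h2 : b (m + 1) ≤ b k := hb.le (by omega) (by omega)
      omega

/-- Left run on an odd row above the `m`-block, from `b (m+1)` all the way to column 0. -/
lemma runF {b : ℕ → ℕ} (hb : GoodB b) {m y : ℕ} (hm : 1 ≤ m) (hy : Odd y) (h2m : 2 * m < y) :
    ∀ t, t ≤ b (m + 1) → (nextFn b)^[t] (b (m + 1), y) = (b (m + 1) - t, y) := by
  have hbm := hb.pos hm
  have hgap := hb.2.2 m hm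
  apply iter_left le_rfl
  intro t ht
  apply next_left' hy (by omega)
  · intro k hk he
    rcases le_or_gt k m with h | h
    · omega
    · have h2 : b (m + 1) ≤ b k := hb.le (by omega) (by omega)
      omega
  · intro k hk he
    rcases le_or_gt k m with h | h
    · omega
    · have h2 : b (m + 1) ≤ b k := hb.le (by omega) (by omega)
      omega

/-- Right run on an even row `y ≥ 2 M` from column 0 to `2 b M`. -/
lemma runG {b : ℕ → ℕ} (hb : GoodB b) {M y : ℕ} (hM : 1 ≤ M) (hev : Even y) (hy : 2 * M ≤ y) :
    ∀ t, t ≤ 2 * b M → (nextFn b)^[t] ((0 : ℕ), y) = (t, y) := by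
  intro t ht
  have h := iter_right (b := b) (y := y) (c1 := 0) (K := t) ?_ t le_rfl
  · simpa using h
  · intro u hu
    apply next_right' hev
    · intro k hk he
      rcases lt_trichotomy k M with h | h | h
      · omega
      · omega
      · have := hb.gap2 hM h; omega
    · intro k hk he
      rcases lt_trichotomy k M with h | h | h
      · right; omega
      · rw [h] at he; omega
      · have := hb.gap2 hM h; omega

def Reach (b : ℕ → ℕ) (p q : ℕ × ℕ) : Prop := ∃ k : ℕ, (nextFn b)^[k] p = q

lemma reach_trans {b : ℕ → ℕ} {p q r : ℕ × ℕ} (h1 : Reach b p q) (h2 : Reach b q r) :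
    Reach b p r := by
  obtain ⟨k1, e1⟩ := h1
  obtain ⟨k2, e2⟩ := h2
  exact ⟨k2 + k1, by rw [Function.iterate_add_apply, e1, e2]⟩

/-- Descend the spiral around `b m` from `(2 b m, 2 r)` to `(b m + 1, 0)`. -/
lemma descend2B {b : ℕ → ℕ} (hb : GoodB b) {m : ℕ} (hm : 1 ≤ m) :
    ∀ r, 1 ≤ r → r ≤ m → Reach b (2 * b m, 2 * r) (b m + 1, 0) := by
  have hbm := hb.pos hm
  intro r
  induction r with
  | zero => intro h _; exact absurd h (by omega)
  | succ r ih =>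
    intro _ hrm
    have e1 : nextFn b (2 * b m, 2 * (r + 1)) = (2 * b m, 2 * r + 1) := by
      have h := step_down_2B hb hm (y := 2 * (r + 1))
        (Nat.even_iff.mpr (by omega)) (by omega) (by omega)
      rw [show 2 * (r + 1) - 1 = 2 * r + 1 by omega] at h
      exact h
    have e2 : (nextFn b)^[b m - 1] (2 * b m, 2 * r + 1) = (b m + 1, 2 * r + 1) := by
      have h := runA hb hm (y := 2 * r + 1) (Nat.odd_iff.mpr (by omega)) (b m - 1) le_rfl
      rw [show 2 * b m - (b m - 1) = b m + 1 by omega] at h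
      exact h
    have e3 : nextFn b (b m + 1, 2 * r + 1) = (b m + 1, 2 * r) := by
      have h := step_down_B1 hb hm (y := 2 * r + 1) (Nat.odd_iff.mpr (by omega)) (by omega)
      rw [show 2 * r + 1 - 1 = 2 * r by omega] at h
      exact h
    have R1 : Reach b (2 * b m, 2 * (r + 1)) (b m + 1, 2 * r) :=
      reach_trans (reach_trans ⟨1, by simpa using e1⟩ ⟨b m - 1, e2⟩) ⟨1, by simpa using e3⟩
    rcases Nat.eq_zero_or_pos r with h0 | h0
    · subst h0
      simpa using R1
    · have e4 : (nextFn b)^[b m - 1] (b m + 1, 2 * r) = (2 * b m, 2 * r) := by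
        have h := runB hb hm (y := 2 * r) (Nat.even_iff.mpr (by omega)) (b m - 1) le_rfl
        rw [show b m + 1 + (b m - 1) = 2 * b m by omega] at h
        exact h
      exact reach_trans (reach_trans R1 ⟨b m - 1, e4⟩) (ih h0 (by omega))

lemma descendB1 {b : ℕ → ℕ} (hb : GoodB b) {m y : ℕ} (hm : 1 ≤ m)
    (hod : Odd y) (hy : y < 2 * m) : Reach b (b m + 1, y) (b m + 1, 0) := by
  have hbm := hb.pos hm
  have hy1 := Nat.odd_iff.mp hod
  have e1 : nextFn b (b m + 1, y) = (b m + 1, y - 1) := step_down_B1 hb hm hod hy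
  rcases eq_or_lt_of_le (show 1 ≤ y by omega) with h1 | h1
  · exact ⟨1, by rw [Function.iterate_one, e1, show y - 1 = 0 by omega]⟩
  · have e4 : (nextFn b)^[b m - 1] (b m + 1, y - 1) = (2 * b m, y - 1) := by
      have h := runB hb hm (y := y - 1) (Nat.even_iff.mpr (by omega)) (b m - 1) le_rfl
      rw [show b m + 1 + (b m - 1) = 2 * b m by omega] at h
      exact h
    have e5 := descend2B hb hm ((y - 1) / 2) (by omega) (by omega)
    rw [show 2 * ((y - 1) / 2) = y - 1 by omega] at e5
    exact reach_trans (reach_trans ⟨1, by simpa using e1⟩ ⟨b m - 1, e4⟩) e5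

/-- From any down-state of level `m`, the walk reaches `(b m + 1, 0)`. -/
lemma dsDescend {b : ℕ → ℕ} (hb : GoodB b) {m : ℕ} (hm : 1 ≤ m) {d : ℕ × ℕ}
    (hd : (d.1 = b m + 1 ∧ Odd d.2 ∧ d.2 < 2 * m) ∨
          (d.1 = 2 * b m ∧ Even d.2 ∧ 0 < d.2 ∧ d.2 ≤ 2 * m)) :
    Reach b d (b m + 1, 0) := by
  obtain ⟨c, y⟩ := d
  dsimp only at hd
  rcases hd with ⟨hc, hod, hlt⟩ | ⟨hc, hev, hpos, hle⟩
  · subst hc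
    exact descendB1 hb hm hod hlt
  · subst hc
    have hy := Nat.even_iff.mp hev
    have e := descend2B hb hm (y / 2) (by omega) (by omega)
    rw [show 2 * (y / 2) = y by omega] at e
    exact e

/-- Climb from `(b m + 1, 0)` over the `(m+1)`-block down to `(b (m+1) + 1, 0)`. -/
lemma climb {b : ℕ → ℕ} (hb : GoodB b) {m : ℕ} (hm : 1 ≤ m) :
    Reach b (b m + 1, 0) (b (m + 1) + 1, 0) := by
  have hbm := hb.pos hm
  have hgap := hb.2.2 m hm
  have l1 : (nextFn b)^[b (m + 1) - (b m + 1)] (b m + 1, 0) = (b (m + 1), 0) := by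
    have h := run0 hb hm (c1 := b m + 1) (by omega) (b (m + 1) - (b m + 1)) (by omega)
    rw [show b m + 1 + (b (m + 1) - (b m + 1)) = b (m + 1) by omega] at h
    exact h
  have l2 : nextFn b (b (m + 1), 0) = (b (m + 1), 1) :=
    step_up_B (by omega) Even.zero (by omega)
  have zig : ∀ r, r ≤ m → Reach b (b (m + 1), 1) (b (m + 1), 2 * r + 1) := by
    intro r
    induction r with
    | zero => intro _; exact ⟨0, by norm_num⟩
    | succ r ih =>
      intro hr
      have hih := ih (by omega)
      have z1 : (nextFn b)^[b (m + 1) - (2 * b m + 1)] (b (m + 1), 2 * r + 1)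
          = (2 * b m + 1, 2 * r + 1) := by
        have h := runD hb hm (y := 2 * r + 1) (Nat.odd_iff.mpr (by omega))
          (b (m + 1) - (2 * b m + 1)) le_rfl
        rw [show b (m + 1) - (b (m + 1) - (2 * b m + 1)) = 2 * b m + 1 by omega] at h
        exact h
      have z2 : nextFn b (2 * b m + 1, 2 * r + 1) = (2 * b m + 1, 2 * r + 2) :=
        step_up_2B1 hm (Nat.odd_iff.mpr (by omega)) (by omega)
      have z3 : (nextFn b)^[b (m + 1) - (2 * b m + 1)] (2 * b m + 1, 2 * r + 2)
          = (b (m + 1), 2 * r + 2) := by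
        have h := runE hb hm (y := 2 * r + 2) (Nat.even_iff.mpr (by omega))
          (b (m + 1) - (2 * b m + 1)) (by omega)
        rw [show 2 * b m + 1 + (b (m + 1) - (2 * b m + 1)) = b (m + 1) by omega] at h
        exact h
      have z4 : nextFn b (b (m + 1), 2 * r + 2) = (b (m + 1), 2 * r + 3) :=
        step_up_B (by omega) (Nat.even_iff.mpr (by omega)) (by omega)
      rw [show 2 * (r + 1) + 1 = 2 * r + 3 by omega]
      exact reach_trans hih (reach_trans ⟨_, z1⟩ (reach_trans ⟨1, by simpa using z2⟩
        (reach_trans ⟨_, z3⟩ ⟨1, by simpa using z4⟩)))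
  have l3 := zig m le_rfl
  have l4 : (nextFn b)^[b (m + 1)] (b (m + 1), 2 * m + 1) = (0, 2 * m + 1) := by
    have h := runF hb hm (y := 2 * m + 1) (Nat.odd_iff.mpr (by omega)) (by omega)
      (b (m + 1)) le_rfl
    rw [show b (m + 1) - b (m + 1) = 0 by omega] at h
    exact h
  have l5 : nextFn b ((0 : ℕ), 2 * m + 1) = (0, 2 * m + 2) := by
    have h := step_up_0 (b := b) (y := 2 * m + 1) (Nat.odd_iff.mpr (by omega))
    simpa using h
  have l6 : (nextFn b)^[2 * b (m + 1)] ((0 : ℕ), 2 * m + 2) = (2 * b (m + 1), 2 * m + 2) :=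
    runG hb (by omega) (Nat.even_iff.mpr (by omega)) (by omega) (2 * b (m + 1)) le_rfl
  have l7 : Reach b (2 * b (m + 1), 2 * m + 2) (b (m + 1) + 1, 0) := by
    have h := descend2B hb (show 1 ≤ m + 1 by omega) (m + 1) (by omega) le_rfl
    rw [show 2 * (m + 1) = 2 * m + 2 by omega] at h
    exact h
  exact reach_trans ⟨_, l1⟩ (reach_trans ⟨1, by simpa using l2⟩ (reach_trans l3
    (reach_trans ⟨_, l4⟩ (reach_trans ⟨1, by simpa using l5⟩ (reach_trans ⟨_, l6⟩ l7)))))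

lemma climb_chain {b : ℕ → ℕ} (hb : GoodB b) {m k : ℕ} (hm : 1 ≤ m) (h : m ≤ k) :
    Reach b (b m + 1, 0) (b k + 1, 0) := by
  induction k, h using Nat.le_induction with
  | base => exact ⟨0, rfl⟩
  | succ k hk ih => exact reach_trans ih (climb hb (by omega))

/-- Backward window: every down-state of level `m` is preceded by `b m - 1` non-down states. -/
lemma bwindow {b : ℕ → ℕ} (hb : GoodB b) {m : ℕ} (hm : 1 ≤ m) {d : ℕ × ℕ}
    (hd : (d.1 = b m + 1 ∧ Odd d.2 ∧ d.2 < 2 * m) ∨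
          (d.1 = 2 * b m ∧ Even d.2 ∧ 0 < d.2 ∧ d.2 ≤ 2 * m)) :
    ∃ q G, b m ≤ G ∧ (nextFn b)^[G] q = d ∧
      ∀ s, G - b m < s → s < G →
        ¬ DnC b ((nextFn b)^[s] q).1 ((nextFn b)^[s] q).2 := by
  have hbm := hb.pos hm
  obtain ⟨c, y⟩ := d
  dsimp only at hd ⊢
  rcases hd with ⟨hc, hod, hlt⟩ | ⟨hc, hev, hpos, hle⟩
  · -- d = (b m + 1, y), y odd, y < 2 m
    subst hc
    have hy1 := Nat.odd_iff.mp hod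
    have h1 : nextFn b (2 * b m, y + 1) = (2 * b m, y) := by
      have h := step_down_2B hb hm (y := y + 1) (Nat.even_iff.mpr (by omega)) (by omega) (by omega)
      rw [show y + 1 - 1 = y by omega] at h
      exact h
    have hiter : ∀ s, 1 ≤ s → s ≤ b m →
        (nextFn b)^[s] (2 * b m, y + 1) = (2 * b m - (s - 1), y) := by
      intro s hs1 hs2
      rw [show s = (s - 1) + 1 by omega, Function.iterate_succ_apply, h1]
      exact runA hb hm hod (s - 1) (by omega)
    refine ⟨(2 * b m, y + 1), b m, le_rfl, ?_, ?_⟩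
    · rw [hiter (b m) (by omega) le_rfl]
      congr 1
      omega
    · intro s hs1 hs2
      rw [hiter s (by omega) (by omega)]
      rintro (⟨k, hk, he, _, _⟩ | ⟨k, hk, he, hev', _, _⟩)
      · dsimp only at he
        rcases lt_trichotomy k m with h | h | h
        · have := hb.gap2 hk h; omega
        · rw [h] at he; omega
        · have := hb.gap2 hm h; omega
      · have := Nat.even_iff.mp hev'; dsimp only at this; omega
  · by_cases hym : y = 2 * m
    · -- d = (2 b m, 2 m): entered from the top row
      subst hc
      have hy1 := Nat.even_iff.mp hev
      have hiter := runG hb hm hev (by omega)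
      refine ⟨((0 : ℕ), y), 2 * b m, by omega, hiter (2 * b m) le_rfl, ?_⟩
      intro s hs1 hs2
      rw [hiter s (by omega)]
      rintro (⟨k, hk, he, hod', _⟩ | ⟨k, hk, he, _, _, hle'⟩)
      · have := Nat.odd_iff.mp hod'; dsimp only at this; omega
      · dsimp only at he hle'
        rcases lt_trichotomy k m with h | h | h
        · omega
        · rw [h] at he; omega
        · have := hb.gap2 hm h; omega
    · -- d = (2 b m, y), y even, 0 < y < 2 m
      subst hc
      have hy1 := Nat.even_iff.mp hev
      have h1 : nextFn b (b m + 1, y + 1) = (b m + 1, y) := by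
        have h := step_down_B1 hb hm (y := y + 1) (Nat.odd_iff.mpr (by omega)) (by omega)
        rw [show y + 1 - 1 = y by omega] at h
        exact h
      have hiter : ∀ s, 1 ≤ s → s ≤ b m →
          (nextFn b)^[s] (b m + 1, y + 1) = (b m + 1 + (s - 1), y) := by
        intro s hs1 hs2
        rw [show s = (s - 1) + 1 by omega, Function.iterate_succ_apply, h1]
        exact runB hb hm hev (s - 1) (by omega)
      refine ⟨(b m + 1, y + 1), b m, le_rfl, ?_, ?_⟩
      · rw [hiter (b m) (by omega) le_rfl]
        congr 1
        omega
      · intro s hs1 hs2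
        rw [hiter s (by omega) (by omega)]
        rintro (⟨k, hk, he, hod', _⟩ | ⟨k, hk, he, _, _, _⟩)
        · have := Nat.odd_iff.mp hod'; dsimp only at this; omega
        · dsimp only at he
          rcases lt_trichotomy k m with h | h | h
          · have := hb.gap2 hk h; omega
          · rw [h] at he; omega
          · have := hb.gap2 hm h; omega

lemma normK_single (A : ℕ → ℕ → ℝ) (M : ℕ) (p : ℕ × ℕ) :
    normK A M ⇑(Finsupp.single p (1 : ℝ)) = if p.2 ≤ M then A M p.1 else 0 := by
  obtain ⟨p1, p2⟩ := p
  have hcol : ∀ j, colNorm A M (⇑(Finsupp.single ((p1, p2) : ℕ × ℕ) (1 : ℝ))) j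
      = if j = p2 then A M p1 else 0 := by
    intro j
    by_cases hj : j = p2
    · subst hj
      rw [if_pos rfl]
      unfold colNorm
      rw [tsum_eq_single p1 ?_]
      · rw [Finsupp.single_apply, if_pos rfl]
        simp
      · intro i hi
        have hne : ((p1, j) : ℕ × ℕ) ≠ (i, j) := fun h => hi ((congrArg Prod.fst h : p1 = i)).symm
        rw [Finsupp.single_apply, if_neg hne]
        simp
    · rw [if_neg hj]
      unfold colNorm
      have hz : ∀ i : ℕ, |(Finsupp.single ((p1, p2) : ℕ × ℕ) (1 : ℝ)) (i, j)| * A M i = 0 := by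
        intro i
        have hne : ((p1, p2) : ℕ × ℕ) ≠ (i, j) := fun h => hj ((congrArg Prod.snd h : p2 = j)).symm
        rw [Finsupp.single_apply, if_neg hne]
        simp
      rw [tsum_congr hz, tsum_zero]
  unfold normK
  rw [Finset.sum_congr rfl fun j _ => hcol j,
    Finset.sum_ite_eq' (Finset.range (M + 1)) p2 (fun _ => A M p1)]
  simp [Nat.lt_succ_iff]

end Snl

/-- If `j ≥ pos(Δ_{n+1},0)` and `1 ≤ i ≤ pos(Δ_{n+1},0)`, then `‖e_{i+j}‖_N ≤ 2ⁱ ‖e_j‖_{N+1}`. -/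
theorem snail_estimate
    (A : ℕ → ℕ → ℝ) (b : ℕ → ℕ) (pos : ℕ × ℕ → ℕ) (a s Δ : ℕ → ℕ)
    (hA1 : ∀ N j, 1 ≤ A N j)
    (hA2m : ∀ j, Monotone fun N => A N j)
    (hA2u : ∀ j, ¬ BddAbove (Set.range fun N => A N j))
    (hA3m : ∀ N, Monotone fun j => A N j)
    (hA3u : ∀ N, ¬ BddAbove (Set.range fun j => A N j))
    (hA4 : ∀ N j, A N (j + 1) ≤ 2 * A N j)
    (hA5 : ∀ N, Filter.Tendsto (fun j => A N j / A (N + 1) j) Filter.atTop (nhds 0))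
    (hA6 : ∀ N, Filter.Tendsto (fun j => (2 : ℝ) ^ j / A N j) Filter.atTop Filter.atTop)
    (hbpos : ∀ n, 1 ≤ n → 0 < b n)
    (hbmono : ∀ n, 1 ≤ n → b n < b (n + 1))
    (hbgap : ∀ n, 1 ≤ n → 2 * b n + 1 < b (n + 1))
    (hpos : ∀ p k, pos p = k ↔ (nextFn b)^[k] (0, 0) = p)
    (hΔ0 : Δ 0 = 1)
    (hΔ : ∀ n, Δ (n + 1) = a n + pos (Δ n, 0))
    (hord0 : Δ 0 < a 0 ∧ a 0 < Δ 1)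
    (hord : ∀ n, 1 ≤ n → Δ n < b n ∧ 2 * b n < s n ∧ s n < a n ∧ a n < Δ (n + 1))
    (hbΔ : ∀ n, 1 ≤ n → 2 * pos (Δ n, 0) ≤ b n)
    :
    ∀ n j i N : ℕ, pos (Δ (n + 1), 0) ≤ j → 1 ≤ i → i ≤ pos (Δ (n + 1), 0) →
      normK A N ⇑(eVec b (i + j)) ≤ 2 ^ i * normK A (N + 1) ⇑(eVec b j) := by
  have hb : Snl.GoodB b := ⟨hbpos, hbmono, hbgap⟩
  have hpe : ∀ k, pos (enum b k) = k := fun k => (hpos _ k).2 rfl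
  have hep : ∀ p, enum b (pos p) = p := fun p => (hpos p _).1 rfl
  have henum_add : ∀ i j : ℕ, enum b (i + j) = (nextFn b)^[i] (enum b j) := fun i j =>
    Function.iterate_add_apply _ i j _
  have henum_succ : ∀ k : ℕ, enum b (k + 1) = nextFn b (enum b k) := fun k =>
    Function.iterate_succ_apply' _ _ _
  have hreach_le : ∀ p q : ℕ × ℕ, Snl.Reach b p q → pos p ≤ pos q := by
    rintro p q ⟨k, hk⟩
    have h1 : enum b (k + pos p) = q := by rw [henum_add, hep, hk]
    have h2 := congrArg pos h1
    rw [hpe] at h2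
    omega
  have hΔp : ∀ n : ℕ, 0 < Δ (n + 1) := by
    intro n
    cases n with
    | zero => show 0 < Δ 1; omega
    | succ k =>
      have h := hord (k + 1) (by omega)
      have hbk := hbpos (k + 1) (by omega)
      omega
  have hP1 : ∀ n : ℕ, 1 ≤ pos (Δ (n + 1), 0) := by
    intro n
    rcases Nat.eq_zero_or_pos (pos (Δ (n + 1), 0)) with h | h
    · have h0 := hep (Δ (n + 1), 0)
      rw [h] at h0
      have h1 : ((0, 0) : ℕ × ℕ) = (Δ (n + 1), 0) := h0
      have h2 := congrArg Prod.fst h1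
      have h3 : (0 : ℕ) = Δ (n + 1) := h2
      have := hΔp n
      omega
    · exact h
  -- the core lemma: no two down-states within a window of length `pos (Δ (n+1), 0)`
  -- beyond position `pos (Δ (n+1), 0)`
  have core : ∀ (n t1 t2 : ℕ), pos (Δ (n + 1), 0) ≤ t1 → t1 < t2 →
      t2 - t1 < pos (Δ (n + 1), 0) →
      Snl.DnC b (enum b t1).1 (enum b t1).2 → Snl.DnC b (enum b t2).1 (enum b t2).2 → False := by
    intro n t1 t2 ht1 h12 hlt hd1 hd2
    have hP := hP1 n
    have hPb : 2 * pos (Δ (n + 1), 0) ≤ b (n + 1) := hbΔ (n + 1) (by omega)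
    obtain ⟨m, hm, hshape⟩ : ∃ m, 1 ≤ m ∧
        (((enum b t2).1 = b m + 1 ∧ Odd (enum b t2).2 ∧ (enum b t2).2 < 2 * m) ∨
         ((enum b t2).1 = 2 * b m ∧ Even (enum b t2).2 ∧ 0 < (enum b t2).2 ∧
           (enum b t2).2 ≤ 2 * m)) := by
      rcases hd2 with ⟨m, hm, h⟩ | ⟨m, hm, h⟩
      exacts [⟨m, hm, Or.inl h⟩, ⟨m, hm, Or.inr h⟩]
    by_cases hmn : m ≤ n
    · have hn1 : 1 ≤ n := hm.trans hmn
      have hR1 : Snl.Reach b (enum b t2) (b m + 1, 0) := Snl.dsDescend hb hm hshape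
      have hR2 : Snl.Reach b (b m + 1, 0) (b n + 1, 0) := Snl.climb_chain hb hm hmn
      have hR3 : Snl.Reach b (b n + 1, 0) (Δ (n + 1), 0) := by
        have ho := hord n hn1
        have ho2 := (hord (n + 1) (by omega)).1
        have hbn := hbpos n hn1
        have h := Snl.run0 hb hn1 (c1 := b n + 1) (by omega) (Δ (n + 1) - (b n + 1)) (by omega)
        rw [show b n + 1 + (Δ (n + 1) - (b n + 1)) = Δ (n + 1) by omega] at h
        exact ⟨_, h⟩
      have hle := hreach_le _ _ (Snl.reach_trans (Snl.reach_trans hR1 hR2) hR3)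
      rw [hpe] at hle
      omega
    · push_neg at hmn
      have hble : b (n + 1) ≤ b m := hb.le (by omega) (by omega)
      obtain ⟨q, G, hG, hGq, hwin⟩ := Snl.bwindow hb hm hshape
      have ht2 : t2 = G + pos q := by
        have h1 : enum b (G + pos q) = enum b t2 := by rw [henum_add, hep, hGq]
        have h2 := congrArg pos h1
        rw [hpe, hpe] at h2
        omega
      have hgb : t2 - t1 < b m := by omega
      have he1 : enum b t1 = (nextFn b)^[G - (t2 - t1)] q := by
        have hx : enum b ((G - (t2 - t1)) + pos q) = (nextFn b)^[G - (t2 - t1)] q := by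
          rw [henum_add, hep]
        rw [← hx]
        congr 1
        omega
      exact hwin (G - (t2 - t1)) (by omega) (by omega) (by rw [← he1]; exact hd1)
  have mono_seg : ∀ (p K : ℕ),
      (∀ t, t < K → ¬ Snl.DnC b (enum b (p + t)).1 (enum b (p + t)).2) →
      ∀ t, t ≤ K → (enum b p).2 ≤ (enum b (p + t)).2 := by
    intro p K hcl t
    induction t with
    | zero => intro _; simp
    | succ t ih =>
      intro ht
      have h1 := ih (by omega)
      have h2 : enum b (p + (t + 1)) = nextFn b (enum b (p + t)) := by
        rw [show p + (t + 1) = (p + t) + 1 by omega, henum_succ]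
      have h3 := Snl.next_snd_mono (hcl t (by omega))
      rw [h2]
      omega
  have row_bound : ∀ (n j i : ℕ), pos (Δ (n + 1), 0) ≤ j → 1 ≤ i →
      i ≤ pos (Δ (n + 1), 0) → (enum b j).2 ≤ (enum b (i + j)).2 + 1 := by
    intro n j i hj hi1 hi2
    rw [show i + j = j + i by omega]
    by_cases hex : ∃ s, s < i ∧ Snl.DnC b (enum b (j + s)).1 (enum b (j + s)).2
    · classical
      obtain ⟨s0, ⟨hs0i, hs0D⟩, hmin⟩ :
          ∃ s0, (s0 < i ∧ Snl.DnC b (enum b (j + s0)).1 (enum b (j + s0)).2) ∧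
            ∀ t, t < s0 → ¬ (t < i ∧ Snl.DnC b (enum b (j + t)).1 (enum b (j + t)).2) :=
        ⟨Nat.find hex, Nat.find_spec hex, fun t ht => Nat.find_min hex ht⟩
      have hm1 : (enum b j).2 ≤ (enum b (j + s0)).2 :=
        mono_seg j s0 (fun t ht hD => hmin t ht ⟨by omega, hD⟩) s0 le_rfl
      have hm2 : (enum b (j + s0)).2 ≤ (enum b (j + s0 + 1)).2 + 1 := by
        rw [henum_succ (j + s0)]
        exact Snl.next_snd_ge b _
      have hclean : ∀ u, u < i - s0 - 1 →
          ¬ Snl.DnC b (enum b ((j + s0 + 1) + u)).1 (enum b ((j + s0 + 1) + u)).2 := by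
        intro u hu hD
        exact core n (j + s0) ((j + s0 + 1) + u) (by omega) (by omega) (by omega) hs0D hD
      have hm3 := mono_seg (j + s0 + 1) (i - s0 - 1) hclean (i - s0 - 1) le_rfl
      rw [show (j + s0 + 1) + (i - s0 - 1) = j + i by omega] at hm3
      omega
    · push_neg at hex
      have h := mono_seg j i (fun t ht => hex t ht) i le_rfl
      omega
  have fst_iter : ∀ (k : ℕ) (p : ℕ × ℕ), ((nextFn b)^[k] p).1 ≤ p.1 + k := by
    intro k
    induction k with
    | zero => intro p; simp
    | succ k ih =>
      intro p
      rw [Function.iterate_succ_apply']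
      have h1 := Snl.next_fst_le b ((nextFn b)^[k] p)
      have h2 := ih p
      omega
  have pow2 : ∀ (N k c : ℕ), A N (c + k) ≤ 2 ^ k * A N c := by
    intro N k
    induction k with
    | zero => intro c; simp
    | succ k ih =>
      intro c
      have h1 : A N (c + (k + 1)) ≤ 2 * A N (c + k) := by
        rw [show c + (k + 1) = (c + k) + 1 by omega]
        exact hA4 N (c + k)
      have h2 : 2 * A N (c + k) ≤ 2 * (2 ^ k * A N c) := by
        have := ih c
        linarith
      calc A N (c + (k + 1)) ≤ 2 * (2 ^ k * A N c) := h1.trans h2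
        _ = 2 ^ (k + 1) * A N c := by ring
  intro n j i N hj hi1 hi2
  have hfst : (enum b (i + j)).1 ≤ (enum b j).1 + i := by
    rw [henum_add]
    exact fst_iter i _
  have hsnd := row_bound n j i hj hi1 hi2
  simp only [eVec]
  rw [Snl.normK_single, Snl.normK_single]
  by_cases h2 : (enum b (i + j)).2 ≤ N
  · rw [if_pos h2, if_pos (show (enum b j).2 ≤ N + 1 by omega)]
    have c1 : A N (enum b (i + j)).1 ≤ A N ((enum b j).1 + i) := hA3m N hfst
    have c2 := pow2 N i (enum b j).1
    have c3 : A N (enum b j).1 ≤ A (N + 1) (enum b j).1 := hA2m (enum b j).1 (Nat.le_succ N)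
    have hp : (0 : ℝ) ≤ 2 ^ i := by positivity
    calc A N (enum b (i + j)).1 ≤ A N ((enum b j).1 + i) := c1
      _ ≤ 2 ^ i * A N (enum b j).1 := c2
      _ ≤ 2 ^ i * A (N + 1) (enum b j).1 := mul_le_mul_of_nonneg_left c3 hp
  · rw [if_neg h2]
    apply mul_nonneg (by positivity)
    split_ifs with h
    · exact le_trans zero_le_one (hA1 _ _)
    · exact le_rfl
end
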